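/- Let P be a concurrent heap-manipulating program. If the memory-managed semantics mmsem(P) is strong pointer race free (SPRF), then mmsem(P) = resmmsem(P), i.e., the memory-managed semantics coincides with the ownership-respecting semantics. -/

import Mathlib

/-!
A formalization of the framework of Haziza, Holík, Meyer, Wolff,
"Pointer Race Freedom": heaps, concurrent heap-manipulating programs,
the garbage-collected, memory-managed and ownership-respecting semantics,
validity of pointers, (strong) pointer races, and ownership.
-/

namespace PRF

open scoped Classical

noncomputable section

/-- Pointer expressions over addresses `A`, pointer variables `PV`,
with `n` next-selectors. -/
inductive PExp (A PV : Type) (n : ℕ) : Type where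
  | var  : PV → PExp A PV n
  | next : A → Fin n → PExp A PV n

/-- Data expressions over addresses `A` and data variables `DV`. -/
inductive DExp (A DV : Type) : Type where
  | var  : DV → DExp A DV
  | data : A → DExp A DV

/-- Conditions of assert commands: (negated) equalities of pointer or
data variables. -/
inductive Cond (PV DV : Type) : Type where
  | peq : PV → PV → Cond PV DV
  | deq : DV → DV → Cond PV DV
  | not : Cond PV DV → Cond PV DV

/-- Commands of the while-language. -/
inductive Com (D PV DV : Type) (n : ℕ) : Type where
  | assert    : Cond PV DV → Com D PV DV n
  | malloc    : PV → Com D PV DV n                   -- p := malloc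
  | free      : PV → Com D PV DV n                   -- free(p)
  | readNext  : PV → PV → Fin n → Com D PV DV n      -- p := q.next_i
  | writeNext : PV → Fin n → PV → Com D PV DV n      -- p.next_i := q
  | copyP     : PV → PV → Com D PV DV n              -- p := q
  | readData  : DV → PV → Com D PV DV n              -- x := q.data
  | writeData : PV → DV → Com D PV DV n              -- p.data := x
  | opAsgn    : DV → List DV → (List D → D) → Com D PV DV n  -- x := op(x1,…,xk)

/-- A heap: partial valuations of pointer and data expressions. -/
structure Heap (A D PV DV : Type) (n : ℕ) : Type where
  pval : PExp A PV n → Option A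
  dval : DExp A DV → Option D

/-- An update of a heap (applied by overriding where defined). -/
structure Update (A D PV DV : Type) (n : ℕ) : Type where
  pup : PExp A PV n → Option A
  dup : DExp A DV → Option D

/-- An action: an optional (thread, command) pair — `none` only for the
initial base action — together with an update. -/
structure Act (A D PV DV T : Type) (n : ℕ) : Type where
  tc : Option (T × Com D PV DV n)
  up : Update A D PV DV n

/-- The complement of an assert condition. -/
def Cond.negate {PV DV : Type} : Cond PV DV → Cond PV DV
  | .not b => b
  | b => .not b

/-- Pointer variables occurring in a condition. -/
def Cond.pvars {PV DV : Type} : Cond PV DV → Set PV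
  | .peq p q => {p, q}
  | .deq _ _ => ∅
  | .not b => b.pvars

/-- Data variables occurring in a condition. -/
def Cond.dvars {PV DV : Type} : Cond PV DV → Set DV
  | .peq _ _ => ∅
  | .deq x y => {x, y}
  | .not b => b.dvars

/-- Pointer variables used by a command. -/
def Com.pvars {D PV DV : Type} {n : ℕ} : Com D PV DV n → Set PV
  | .assert b => b.pvars
  | .malloc p => {p}
  | .free p => {p}
  | .readNext p q _ => {p, q}
  | .writeNext p _ q => {p, q}
  | .copyP p q => {p, q}
  | .readData _ q => {q}
  | .writeData p _ => {p}
  | .opAsgn _ _ _ => ∅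

/-- Data variables used by a command. -/
def Com.dvars {D PV DV : Type} {n : ℕ} : Com D PV DV n → Set DV
  | .assert b => b.dvars
  | .readData x _ => {x}
  | .writeData _ x => {x}
  | .opAsgn x ys _ => {x} ∪ {y | y ∈ ys}
  | _ => ∅

/-- A concurrent heap-manipulating program: a set of threads `T`, each an
ordinary while-program presented by its control-flow relation `step`;
every variable is shared (`owner = none`) or local to one thread, a thread
uses only shared variables and its own locals, and every control location
offering `assert b` also offers `assert ¬b`. -/
structure Program (D PV DV T : Type) (n : ℕ) : Type 1 where
  Ctrl : Type
  init : T → Ctrl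
  step : T → Ctrl → Com D PV DV n → Ctrl → Prop
  pOwner : PV → Option T
  dOwner : DV → Option T
  assertCompl : ∀ t c b c', step t c (.assert b) c' →
    ∃ c'', step t c (.assert b.negate) c''
  stepPVars : ∀ t c com c', step t c com c' →
    ∀ p ∈ Com.pvars com, pOwner p = none ∨ pOwner p = some t
  stepDVars : ∀ t c com c', step t c com c' →
    ∀ x ∈ Com.dvars com, dOwner x = none ∨ dOwner x = some t

variable {A D PV DV T : Type} {n : ℕ}

/-- The source address of a pointer expression (`a` for `a.next_i`). -/
def PExp.srcAdr : PExp A PV n → Option A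
  | .var _ => none
  | .next a _ => some a

/-- The source address of a data expression (`a` for `a.data`). -/
def DExp.srcAdr : DExp A DV → Option A
  | .var _ => none
  | .data a => some a

/-- The addresses in use in a heap: those occurring in the domain or range
of the pointer valuation or in the domain of the data valuation. -/
def Heap.adr (h : Heap A D PV DV n) : Set A :=
  {a | (∃ pe, h.pval pe ≠ none ∧ PExp.srcAdr pe = some a)
     ∨ (∃ pe, h.pval pe = some a)
     ∨ (∃ de, h.dval de ≠ none ∧ DExp.srcAdr de = some a)}

/-- Restriction `h|P` of a heap to a set `P` of pointer expressions: keeps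
`pval` only on `P`, keeps `dval` on data variables and on `a.data` for the
addresses `a` hit by some pointer expression in `P`. -/
def Heap.restrict (h : Heap A D PV DV n) (P : Set (PExp A PV n)) :
    Heap A D PV DV n where
  pval pe := if pe ∈ P then h.pval pe else none
  dval de := match de with
    | .var x => h.dval (.var x)
    | .data a => if ∃ pe ∈ P, h.pval pe = some a then h.dval (.data a) else none

/-- Applying an update to a heap. -/
def Heap.apply (h : Heap A D PV DV n) (u : Update A D PV DV n) :
    Heap A D PV DV n where
  pval pe := match u.pup pe with | some a => some a | none => h.pval pe
  dval de := match u.dup de with | some d => some d | none => h.dval de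

/-- The totally undefined heap. -/
def Heap.empty : Heap A D PV DV n := ⟨fun _ => none, fun _ => none⟩

/-- `h[pe ↦ a]`. -/
def Heap.pupdate (h : Heap A D PV DV n) (pe : PExp A PV n) (a : A) :
    Heap A D PV DV n :=
  ⟨fun pe' => if pe' = pe then some a else h.pval pe', h.dval⟩

/-- `h[de ↦ d]`. -/
def Heap.dupdate (h : Heap A D PV DV n) (de : DExp A DV) (d : D) :
    Heap A D PV DV n :=
  ⟨h.pval, fun de' => if de' = de then some d else h.dval de'⟩

/-- The domain of the pointer valuation. -/
def Heap.pdom (h : Heap A D PV DV n) : Set (PExp A PV n) := {pe | h.pval pe ≠ none}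

/-- The domain of the data valuation. -/
def Heap.ddom (h : Heap A D PV DV n) : Set (DExp A DV) := {de | h.dval de ≠ none}

/-- heap(τ): the heap resulting from a computation. -/
def heapOf (τ : List (Act A D PV DV T n)) : Heap A D PV DV n :=
  τ.foldl (fun h act => h.apply act.up) Heap.empty

/-- The empty update. -/
def Update.empty : Update A D PV DV n := ⟨fun _ => none, fun _ => none⟩

/-- The singleton pointer update `[pe ↦ a]`. -/
def Update.pt (pe : PExp A PV n) (a : A) : Update A D PV DV n :=
  ⟨fun pe' => if pe' = pe then some a else none, fun _ => none⟩

/-- The singleton data update `[de ↦ d]`. -/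
def Update.dt (de : DExp A DV) (d : D) : Update A D PV DV n :=
  ⟨fun _ => none, fun de' => if de' = de then some d else none⟩

/-- The update of rule (Malloc1): `[p ↦ a, a.data ↦ d, a.next_i ↦ seg]`. -/
def mallocUpdate (seg : A) (p : PV) (a : A) (d : D) : Update A D PV DV n :=
  ⟨fun pe => if pe = PExp.var p then some a
             else if ∃ i, pe = PExp.next a i then some seg else none,
   fun de => if de = DExp.data a then some d else none⟩

/-- The update of the base action: every pointer variable is set to `seg`,
every data variable to an arbitrary initial value. -/
def baseUpdate (seg : A) (dinit : DV → D) : Update A D PV DV n :=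
  ⟨fun pe => match pe with | .var _ => some seg | _ => none,
   fun de => match de with | .var x => some (dinit x) | _ => none⟩

/-- Satisfaction of a condition (with polarity); an assertion and its
negation both pass when an involved pointer holds `seg`. -/
def condSat (seg : A) (h : Heap A D PV DV n) : Bool → Cond PV DV → Prop
  | pol, .not b => condSat seg h (!pol) b
  | pol, .peq p q =>
      (if pol then h.pval (.var p) = h.pval (.var q)
       else h.pval (.var p) ≠ h.pval (.var q))
      ∨ h.pval (.var p) = some seg ∨ h.pval (.var q) = some seg
  | pol, .deq x y =>
      if pol then h.dval (.var x) = h.dval (.var y)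
      else h.dval (.var x) ≠ h.dval (.var y)

/-- One step of the freed-addresses bookkeeping. -/
def freedStep (seg : A) (h : Heap A D PV DV n) (F : Set A)
    (act : Act A D PV DV T n) : Set A :=
  match act.tc with
  | some (_, .free p) =>
      match h.pval (.var p) with
      | some a => if a = seg then F else insert a F
      | none => F
  | some (_, .malloc p) =>
      match act.up.pup (.var p) with
      | some a => F \ {a}
      | none => F
  | _ => F

def freedAux (seg : A) : Heap A D PV DV n → Set A → List (Act A D PV DV T n) → Set A
  | _, F, [] => F
  | h, F, act :: τ => freedAux seg (h.apply act.up) (freedStep seg h F act) τ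

/-- freed(τ): addresses freed and not re-allocated since. -/
def freedOf (seg : A) (τ : List (Act A D PV DV T n)) : Set A :=
  freedAux seg Heap.empty ∅ τ

/-- invalid(a): the pointer expressions invalidated by freeing `a`. -/
def invalidOf (h : Heap A D PV DV n) (a : A) : Set (PExp A PV n) :=
  {pe | h.pval pe = some a} ∪ {pe | ∃ i, pe = PExp.next a i}

/-- One step of the validity bookkeeping. -/
def validStep (seg : A) (h : Heap A D PV DV n) (V : Set (PExp A PV n))
    (act : Act A D PV DV T n) : Set (PExp A PV n) :=
  match act.tc with
  | some (_, .free p) =>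
      match h.pval (.var p) with
      | some a => if a = seg then V else V \ invalidOf h a
      | none => V
  | some (_, .copyP p q) =>
      if PExp.var q ∈ V then insert (PExp.var p) V else V \ {PExp.var p}
  | some (_, .readNext p q i) =>
      match h.pval (.var q) with
      | some a => if PExp.next a i ∈ V then insert (PExp.var p) V else V \ {PExp.var p}
      | none => V \ {PExp.var p}
  | some (_, .writeNext p i q) =>
      match h.pval (.var p) with
      | some a => if PExp.var q ∈ V then insert (PExp.next a i) V else V \ {PExp.next a i}
      | none => V
  | some (_, .malloc p) =>
      match act.up.pup (.var p) with
      | some a =>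
          insert (PExp.var p) V ∪
            {pe | ∃ i, pe = PExp.next a i ∧ act.up.pup (PExp.next a i) ≠ none}
      | none => V
  | _ => V

def validAux (seg : A) : Heap A D PV DV n → Set (PExp A PV n) →
    List (Act A D PV DV T n) → Set (PExp A PV n)
  | _, V, [] => V
  | h, V, act :: τ => validAux seg (h.apply act.up) (validStep seg h V act) τ

/-- valid(τ): the valid pointer expressions after a computation; initially
all pointer variables are valid. -/
def validOf (seg : A) (τ : List (Act A D PV DV T n)) : Set (PExp A PV n) :=
  validAux seg Heap.empty {pe | ∃ p, pe = PExp.var p} τ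

/-- One step of the strong-invalidity bookkeeping: a variable becomes
strongly invalid when its value is obtained by dereferencing an invalid
pointer; strong invalidity is propagated by assignments. -/
def sinvStep (h : Heap A D PV DV n) (V : Set (PExp A PV n)) (S : Set (PV ⊕ DV))
    (act : Act A D PV DV T n) : Set (PV ⊕ DV) :=
  match act.tc with
  | some (_, .readNext p q _) =>
      if PExp.var q ∈ V then S \ {Sum.inl p} else insert (Sum.inl p) S
  | some (_, .readData x q) =>
      if PExp.var q ∈ V then S \ {Sum.inr x} else insert (Sum.inr x) S
  | some (_, .copyP p q) =>
      if Sum.inl q ∈ S then insert (Sum.inl p) S else S \ {Sum.inl p}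
  | some (_, .opAsgn x ys _) =>
      if ∃ y ∈ ys, Sum.inr y ∈ S then insert (Sum.inr x) S else S \ {Sum.inr x}
  | some (_, .malloc p) => S \ {Sum.inl p}
  | _ => S

def sinvAux (seg : A) : Heap A D PV DV n → Set (PExp A PV n) → Set (PV ⊕ DV) →
    List (Act A D PV DV T n) → Set (PV ⊕ DV)
  | _, _, S, [] => S
  | h, V, S, act :: τ =>
      sinvAux seg (h.apply act.up) (validStep seg h V act) (sinvStep h V S act) τ

/-- The strongly invalid variables after a computation. -/
def sinvOf (seg : A) (τ : List (Act A D PV DV T n)) : Set (PV ⊕ DV) :=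
  sinvAux seg Heap.empty {pe | ∃ p, pe = PExp.var p} ∅ τ

/-- An assignment command publishes the owned address `a` if it copies `a`
via a valid pointer into a shared variable, a variable of another thread,
or into the heap outside the owner's cells. -/
def publishedBy (P : Program D PV DV T n) (h : Heap A D PV DV n)
    (V : Set (PExp A PV n)) (W : A → Option T) (com : Com D PV DV n) (a : A) :
    Prop :=
  ∃ t', W a = some t' ∧
    ((∃ p q, com = .copyP p q ∧ PExp.var q ∈ V ∧ h.pval (.var q) = some a ∧
        P.pOwner p ≠ some t')
     ∨ (∃ p q i b, com = .readNext p q i ∧ h.pval (.var q) = some b ∧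
        PExp.next b i ∈ V ∧ h.pval (.next b i) = some a ∧ P.pOwner p ≠ some t')
     ∨ (∃ p i q b, com = .writeNext p i q ∧ PExp.var q ∈ V ∧
        h.pval (.var q) = some a ∧ h.pval (.var p) = some b ∧ W b ≠ some t'))

/-- One step of the ownership bookkeeping: a thread owns an address it
allocated (into one of its local variables) by the most recent allocation,
until the address is freed or published. -/
def ownedStep (seg : A) (P : Program D PV DV T n) (h : Heap A D PV DV n)
    (V : Set (PExp A PV n)) (W : A → Option T) (act : Act A D PV DV T n) :
    A → Option T := fun a =>
  match act.tc with
  | some (t, .malloc p) =>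
      match act.up.pup (.var p) with
      | some b => if a = b then (if P.pOwner p = some t then some t else none) else W a
      | none => W a
  | some (_, .free p) =>
      match h.pval (.var p) with
      | some b => if a = b ∧ b ≠ seg then none else W a
      | none => W a
  | some (_, com) => if publishedBy P h V W com a then none else W a
  | none => W a

def ownedAux (seg : A) (P : Program D PV DV T n) :
    Heap A D PV DV n → Set (PExp A PV n) → (A → Option T) →
      List (Act A D PV DV T n) → (A → Option T)
  | _, _, W, [] => W
  | h, V, W, act :: τ =>
      ownedAux seg P (h.apply act.up) (validStep seg h V act)
        (ownedStep seg P h V W act) τ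

/-- owned(·, τ) as a map from addresses to their owning thread, if any. -/
def ownedOf (seg : A) (P : Program D PV DV T n) (τ : List (Act A D PV DV T n)) :
    A → Option T :=
  ownedAux seg P Heap.empty {pe | ∃ p, pe = PExp.var p} (fun _ => none) τ

/-- The operational semantics: `mm = false` gives the garbage-collected
semantics (only rule (Malloc1)), `mm = true` additionally enables (Malloc2). -/
inductive Sem (seg : A) (P : Program D PV DV T n) (mm : Bool) :
    List (Act A D PV DV T n) → (T → P.Ctrl) → Prop where
  | base (dinit : DV → D) :
      Sem seg P mm [⟨none, baseUpdate seg dinit⟩] P.init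
  | assert {τ ctrl} (t : T) (b : Cond PV DV) (c' : P.Ctrl) :
      Sem seg P mm τ ctrl →
      P.step t (ctrl t) (.assert b) c' →
      condSat seg (heapOf τ) true b →
      Sem seg P mm (τ ++ [⟨some (t, .assert b), Update.empty⟩])
        (Function.update ctrl t c')
  | free {τ ctrl} (t : T) (p : PV) (c' : P.Ctrl) :
      Sem seg P mm τ ctrl →
      P.step t (ctrl t) (.free p) c' →
      Sem seg P mm (τ ++ [⟨some (t, .free p), Update.empty⟩])
        (Function.update ctrl t c')
  | copyP {τ ctrl} (t : T) (p q : PV) (c' : P.Ctrl) (b : A) :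
      Sem seg P mm τ ctrl →
      P.step t (ctrl t) (.copyP p q) c' →
      (heapOf τ).pval (.var q) = some b →
      Sem seg P mm (τ ++ [⟨some (t, .copyP p q), Update.pt (.var p) b⟩])
        (Function.update ctrl t c')
  | readNext {τ ctrl} (t : T) (p q : PV) (i : Fin n) (c' : P.Ctrl) (a b : A) :
      Sem seg P mm τ ctrl →
      P.step t (ctrl t) (.readNext p q i) c' →
      (heapOf τ).pval (.var q) = some a → a ≠ seg →
      (heapOf τ).pval (.next a i) = some b →
      Sem seg P mm (τ ++ [⟨some (t, .readNext p q i), Update.pt (.var p) b⟩])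
        (Function.update ctrl t c')
  | writeNext {τ ctrl} (t : T) (p : PV) (i : Fin n) (q : PV) (c' : P.Ctrl) (a b : A) :
      Sem seg P mm τ ctrl →
      P.step t (ctrl t) (.writeNext p i q) c' →
      (heapOf τ).pval (.var p) = some a → a ≠ seg →
      (heapOf τ).pval (.var q) = some b →
      Sem seg P mm (τ ++ [⟨some (t, .writeNext p i q), Update.pt (.next a i) b⟩])
        (Function.update ctrl t c')
  | readData {τ ctrl} (t : T) (x : DV) (q : PV) (c' : P.Ctrl) (a : A) (d : D) :
      Sem seg P mm τ ctrl →
      P.step t (ctrl t) (.readData x q) c' →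
      (heapOf τ).pval (.var q) = some a → a ≠ seg →
      (heapOf τ).dval (.data a) = some d →
      Sem seg P mm (τ ++ [⟨some (t, .readData x q), Update.dt (.var x) d⟩])
        (Function.update ctrl t c')
  | writeData {τ ctrl} (t : T) (q : PV) (x : DV) (c' : P.Ctrl) (a : A) (d : D) :
      Sem seg P mm τ ctrl →
      P.step t (ctrl t) (.writeData q x) c' →
      (heapOf τ).pval (.var q) = some a → a ≠ seg →
      (heapOf τ).dval (.var x) = some d →
      Sem seg P mm (τ ++ [⟨some (t, .writeData q x), Update.dt (.data a) d⟩])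
        (Function.update ctrl t c')
  | opAsgn {τ ctrl} (t : T) (x : DV) (ys : List DV) (op : List D → D)
      (c' : P.Ctrl) (ds : List D) :
      Sem seg P mm τ ctrl →
      P.step t (ctrl t) (.opAsgn x ys op) c' →
      ys.mapM (fun y => (heapOf τ).dval (.var y)) = some ds →
      Sem seg P mm (τ ++ [⟨some (t, .opAsgn x ys op), Update.dt (.var x) (op ds)⟩])
        (Function.update ctrl t c')
  | malloc1 {τ ctrl} (t : T) (p : PV) (c' : P.Ctrl) (a : A) (d : D) :
      Sem seg P mm τ ctrl →
      P.step t (ctrl t) (.malloc p) c' →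
      a ∉ (heapOf τ).adr →
      Sem seg P mm (τ ++ [⟨some (t, .malloc p), mallocUpdate seg p a d⟩])
        (Function.update ctrl t c')
  | malloc2 {τ ctrl} (t : T) (p : PV) (c' : P.Ctrl) (a : A) :
      mm = true →
      Sem seg P mm τ ctrl →
      P.step t (ctrl t) (.malloc p) c' →
      a ∈ freedOf seg τ →
      Sem seg P mm (τ ++ [⟨some (t, .malloc p), Update.pt (.var p) a⟩])
        (Function.update ctrl t c')

/-- The garbage-collected semantics gcsem(P). -/
def gcsem (seg : A) (P : Program D PV DV T n) : Set (List (Act A D PV DV T n)) :=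
  {τ | ∃ ctrl, Sem seg P false τ ctrl}

/-- The memory-managed semantics mmsem(P). -/
def mmsem (seg : A) (P : Program D PV DV T n) : Set (List (Act A D PV DV T n)) :=
  {τ | ∃ ctrl, Sem seg P true τ ctrl}

/-- The pointer variables a command frees, dereferences, or uses in an
assertion. -/
def racyVars {D PV DV : Type} {n : ℕ} : Com D PV DV n → Set PV
  | .free p => {p}
  | .readNext _ q _ => {q}
  | .writeNext p _ _ => {p}
  | .readData _ q => {q}
  | .writeData p _ => {p}
  | .assert b => b.pvars
  | _ => ∅

/-- The action `act` raises a pointer race after `τ`. -/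
def isPRStep (seg : A) (τ : List (Act A D PV DV T n)) (act : Act A D PV DV T n) :
    Prop :=
  ∃ t com, act.tc = some (t, com) ∧ ∃ p ∈ racyVars com, PExp.var p ∉ validOf seg τ

/-- The computation `σ` is a pointer race. -/
def isPR (seg : A) (σ : List (Act A D PV DV T n)) : Prop :=
  ∃ τ act, σ = τ ++ [act] ∧ isPRStep seg τ act

/-- A set of computations is PRF if it contains no pointer race. -/
def SetPRF (seg : A) (S : Set (List (Act A D PV DV T n))) : Prop :=
  ∀ σ ∈ S, ¬ isPR seg σ

/-- A computation is PRF if none of its prefixes is a pointer race. -/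
def CompPRF (seg : A) (τ : List (Act A D PV DV T n)) : Prop :=
  ∀ σ, σ <+: τ → ¬ isPR seg σ

/-- The action `act` raises a strong pointer race after `τ`. -/
def isSPRStep (seg : A) (τ : List (Act A D PV DV T n)) (act : Act A D PV DV T n) :
    Prop :=
  ∃ t com, act.tc = some (t, com) ∧
    ((∃ p : PV,
        (com = .free p ∨ (∃ i q, com = .writeNext p i q) ∨ (∃ x, com = .writeData p x)) ∧
        PExp.var p ∉ validOf seg τ)
     ∨ (∃ q : PV,
        ((∃ p i, com = .readNext p q i) ∨ (∃ x, com = .readData x q)) ∧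
        Sum.inl q ∈ sinvOf seg τ)
     ∨ (∃ b, com = .assert b ∧
        ((∃ p ∈ Cond.pvars b, Sum.inl p ∈ sinvOf seg τ)
         ∨ (∃ x ∈ Cond.dvars b, Sum.inr x ∈ sinvOf seg τ))))

/-- The computation `σ` is a strong pointer race. -/
def isSPR (seg : A) (σ : List (Act A D PV DV T n)) : Prop :=
  ∃ τ act, σ = τ ++ [act] ∧ isSPRStep seg τ act

/-- A set of computations is SPRF if it contains no strong pointer race. -/
def SetSPRF (seg : A) (S : Set (List (Act A D PV DV T n))) : Prop :=
  ∀ σ ∈ S, ¬ isSPR seg σ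

/-- A computation is SPRF if none of its prefixes is a strong pointer race. -/
def CompSPRF (seg : A) (τ : List (Act A D PV DV T n)) : Prop :=
  ∀ σ, σ <+: τ → ¬ isSPR seg σ

/-- The action `act` extending `τ` violates ownership. -/
def violatesOwnership (seg : A) (P : Program D PV DV T n)
    (τ : List (Act A D PV DV T n)) (act : Act A D PV DV T n) : Prop :=
  ∃ t com, act.tc = some (t, com) ∧
    ∃ p : PV,
      (com = .free p ∨ (∃ i q, com = .writeNext p i q) ∨ (∃ x, com = .writeData p x)) ∧
      ∃ a t', (heapOf τ).pval (.var p) = some a ∧ ownedOf seg P τ a = some t' ∧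
        (t' ≠ t ∨ P.pOwner p = none)

/-- The ownership-respecting semantics resmmsem(P): the computations of
mmsem(P) none of whose actions violates ownership. -/
def resmmsem (seg : A) (P : Program D PV DV T n) : Set (List (Act A D PV DV T n)) :=
  {σ | σ ∈ mmsem seg P ∧ ∀ τ act, (τ ++ [act]) <+: σ → ¬ violatesOwnership seg P τ act}

/-- The extension of an address map to pointer expressions. -/
def mapPExp (f : A → A) : PExp A PV n → PExp A PV n
  | .var p => .var p
  | .next a i => .next (f a) i

/-- The extension of an address map to data expressions. -/
def mapDExp (f : A → A) : DExp A DV → DExp A DV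
  | .var x => .var x
  | .data a => .data (f a)

/-- `f` is a heap isomorphism from `h1` to `h2`: a bijection between the
addresses in use whose extension to expressions (with `f seg = seg`) is a
bijection between the domains and is compatible with the valuations. -/
structure IsHeapIso (seg : A) (h1 h2 : Heap A D PV DV n) (f : A → A) : Prop where
  fseg : f seg = seg
  adrBij : Set.BijOn f h1.adr h2.adr
  pdomBij : Set.BijOn (mapPExp f) h1.pdom h2.pdom
  ddomBij : Set.BijOn (mapDExp f) h1.ddom h2.ddom
  pcompat : ∀ pe ∈ h1.pdom, h2.pval (mapPExp f pe) = (h1.pval pe).map f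
  dcompat : ∀ de ∈ h1.ddom, h2.dval (mapDExp f de) = h1.dval de

/-- `h1 ≅ h2`. -/
def HeapIso (seg : A) (h1 h2 : Heap A D PV DV n) : Prop :=
  ∃ f, IsHeapIso seg h1 h2 f

/-- Heap equivalence of computations: same projection to (thread, command)
pairs and isomorphic valid-restricted heaps. -/
def heapEquiv (seg : A) (τ σ : List (Act A D PV DV T n)) : Prop :=
  τ.map Act.tc = σ.map Act.tc ∧
  HeapIso seg ((heapOf τ).restrict (validOf seg τ))
    ((heapOf σ).restrict (validOf seg σ))

/-- The owning pointers after `τ`: valid pointer expressions whose target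
is owned, together with valid next selectors of owned addresses. -/
def ownpOf (seg : A) (P : Program D PV DV T n) (τ : List (Act A D PV DV T n)) :
    Set (PExp A PV n) :=
  {pe | pe ∈ validOf seg τ ∧
    ((∃ a t, (heapOf τ).pval pe = some a ∧ ownedOf seg P τ a = some t)
     ∨ (∃ a i t, pe = PExp.next a i ∧ ownedOf seg P τ a = some t))}

/-- The target and source addresses of a pointer expression in a heap. -/
def exprAdrs (h : Heap A D PV DV n) (pe : PExp A PV n) : Set A :=
  {a | h.pval pe = some a} ∪ {a | PExp.srcAdr pe = some a}

/-- A set of owning pointers is coherent if owning pointers sharing a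
target or source address are included or excluded together. -/
def Coherent (seg : A) (P : Program D PV DV T n) (τ : List (Act A D PV DV T n))
    (O : Set (PExp A PV n)) : Prop :=
  ∀ pe ∈ ownpOf seg P τ, ∀ pe' ∈ ownpOf seg P τ,
    (∃ a, a ∈ exprAdrs (heapOf τ) pe ∧ a ∈ exprAdrs (heapOf τ) pe') →
    (pe ∈ O ↔ pe' ∈ O)

/-- The addresses occurring in a set of pointer expressions. -/
def adrsOfSet (h : Heap A D PV DV n) (O : Set (PExp A PV n)) : Set A :=
  ⋃ pe ∈ O, exprAdrs h pe



/-! ### Auxiliary lemmas for the SPRF guarantee -/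

section SPRFProof

variable (seg : A) (P : Program D PV DV T n)

lemma heapOf_append (τ : List (Act A D PV DV T n)) (act : Act A D PV DV T n) :
    heapOf (τ ++ [act]) = (heapOf τ).apply act.up := by
  simp [heapOf]

lemma freedAux_append (act : Act A D PV DV T n) :
    ∀ (τ : List (Act A D PV DV T n)) (h : Heap A D PV DV n) (F : Set A),
      freedAux (T := T) seg h F (τ ++ [act]) =
        freedStep seg (τ.foldl (fun h act => h.apply act.up) h) (freedAux seg h F τ) act
  | [], h, F => rfl
  | a :: l, h, F => by
      simpa [freedAux] using freedAux_append act l (h.apply a.up) (freedStep seg h F a)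

lemma validAux_append (act : Act A D PV DV T n) :
    ∀ (τ : List (Act A D PV DV T n)) (h : Heap A D PV DV n) (V : Set (PExp A PV n)),
      validAux (T := T) seg h V (τ ++ [act]) =
        validStep seg (τ.foldl (fun h act => h.apply act.up) h) (validAux seg h V τ) act
  | [], h, V => rfl
  | a :: l, h, V => by
      simpa [validAux] using validAux_append act l (h.apply a.up) (validStep seg h V a)

lemma ownedAux_append (act : Act A D PV DV T n) :
    ∀ (τ : List (Act A D PV DV T n)) (h : Heap A D PV DV n) (V : Set (PExp A PV n))
      (W : A → Option T),
      ownedAux seg P h V W (τ ++ [act]) =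
        ownedStep seg P (τ.foldl (fun h act => h.apply act.up) h) (validAux seg h V τ)
          (ownedAux seg P h V W τ) act
  | [], h, V, W => rfl
  | a :: l, h, V, W => by
      simpa [ownedAux, validAux] using
        ownedAux_append act l (h.apply a.up) (validStep seg h V a) (ownedStep seg P h V W a)

lemma freedOf_append (τ : List (Act A D PV DV T n)) (act : Act A D PV DV T n) :
    freedOf seg (τ ++ [act]) = freedStep seg (heapOf τ) (freedOf seg τ) act :=
  freedAux_append seg act τ Heap.empty ∅

lemma validOf_append (τ : List (Act A D PV DV T n)) (act : Act A D PV DV T n) :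
    validOf seg (τ ++ [act]) = validStep seg (heapOf τ) (validOf seg τ) act :=
  validAux_append seg act τ Heap.empty _

lemma ownedOf_append (τ : List (Act A D PV DV T n)) (act : Act A D PV DV T n) :
    ownedOf seg P (τ ++ [act]) =
      ownedStep seg P (heapOf τ) (validOf seg τ) (ownedOf seg P τ) act :=
  ownedAux_append seg P act τ Heap.empty _ _

lemma apply_empty (h : Heap A D PV DV n) : h.apply Update.empty = h := rfl

lemma pval_apply_pt (h : Heap A D PV DV n) (pe : PExp A PV n) (a : A)
    (pe' : PExp A PV n) :
    (h.apply (Update.pt pe a)).pval pe' = if pe' = pe then some a else h.pval pe' := by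
  simp only [Heap.apply, Update.pt]
  split_ifs <;> rfl

lemma dval_apply_pt (h : Heap A D PV DV n) (pe : PExp A PV n) (a : A)
    (de : DExp A DV) :
    (h.apply (Update.pt pe a)).dval de = h.dval de := rfl

lemma pval_apply_dt (h : Heap A D PV DV n) (de : DExp A DV) (d : D)
    (pe : PExp A PV n) :
    (h.apply (Update.dt de d)).pval pe = h.pval pe := rfl

lemma dval_apply_dt (h : Heap A D PV DV n) (de : DExp A DV) (d : D)
    (de' : DExp A DV) :
    (h.apply (Update.dt de d)).dval de' = if de' = de then some d else h.dval de' := by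
  simp only [Heap.apply, Update.dt]
  split_ifs <;> rfl

lemma pval_apply_malloc (h : Heap A D PV DV n) (p : PV) (a : A) (d : D)
    (pe : PExp A PV n) :
    (h.apply (mallocUpdate seg p a d)).pval pe =
      if pe = PExp.var p then some a
      else if ∃ i, pe = PExp.next a i then some seg else h.pval pe := by
  simp only [Heap.apply, mallocUpdate]
  split_ifs <;> rfl

lemma dval_apply_malloc (h : Heap A D PV DV n) (p : PV) (a : A) (d : D)
    (de : DExp A DV) :
    (h.apply (mallocUpdate seg p a d)).dval de =
      if de = DExp.data a then some d else h.dval de := by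
  simp only [Heap.apply, mallocUpdate]
  split_ifs <;> rfl

end SPRFProof
section SPRFProof2

variable (seg : A) (P : Program D PV DV T n)

-- step lemmas for validStep
lemma validStep_assert (h : Heap A D PV DV n) (V) (t : T) (b : Cond PV DV) (u) :
    validStep seg h V ⟨some (t, .assert b), u⟩ = V := rfl

lemma validStep_readData (h : Heap A D PV DV n) (V) (t : T) (x : DV) (q : PV) (u) :
    validStep seg h V ⟨some (t, .readData x q), u⟩ = V := rfl

lemma validStep_writeData (h : Heap A D PV DV n) (V) (t : T) (q : PV) (x : DV) (u) :
    validStep seg h V ⟨some (t, .writeData q x), u⟩ = V := rfl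

lemma validStep_opAsgn (h : Heap A D PV DV n) (V) (t : T) (x : DV) (ys : List DV)
    (op : List D → D) (u) :
    validStep seg h V ⟨some (t, .opAsgn x ys op), u⟩ = V := rfl

lemma validStep_copyP (h : Heap A D PV DV n) (V) (t : T) (p q : PV) (u) :
    validStep seg h V ⟨some (t, .copyP p q), u⟩ =
      if PExp.var q ∈ V then insert (PExp.var p) V else V \ {PExp.var p} := rfl

lemma validStep_free (h : Heap A D PV DV n) (V) (t : T) (p : PV) (u) (a : A)
    (hp : h.pval (.var p) = some a) :
    validStep seg h V ⟨some (t, .free p), u⟩ =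
      if a = seg then V else V \ invalidOf h a := by
  unfold validStep; simp only; rw [hp]

lemma validStep_free_none (h : Heap A D PV DV n) (V) (t : T) (p : PV) (u)
    (hp : h.pval (.var p) = none) :
    validStep seg h V ⟨some (t, .free p), u⟩ = V := by
  unfold validStep; simp only; rw [hp]

lemma validStep_readNext (h : Heap A D PV DV n) (V) (t : T) (p q : PV) (i : Fin n)
    (u) (a : A) (hq : h.pval (.var q) = some a) :
    validStep seg h V ⟨some (t, .readNext p q i), u⟩ =
      if PExp.next a i ∈ V then insert (PExp.var p) V else V \ {PExp.var p} := by
  unfold validStep; simp only; rw [hq]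

lemma validStep_writeNext (h : Heap A D PV DV n) (V) (t : T) (p : PV) (i : Fin n)
    (q : PV) (u) (a : A) (hp : h.pval (.var p) = some a) :
    validStep seg h V ⟨some (t, .writeNext p i q), u⟩ =
      if PExp.var q ∈ V then insert (PExp.next a i) V else V \ {PExp.next a i} := by
  unfold validStep; simp only; rw [hp]

lemma validStep_malloc1 (h : Heap A D PV DV n) (V) (t : T) (p : PV) (a : A) (d : D) :
    validStep seg h V ⟨some (t, .malloc p), mallocUpdate seg p a d⟩ =
      insert (PExp.var p) V ∪ {pe | ∃ i, pe = PExp.next a i} := by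
  unfold validStep
  simp only
  have h1 : (mallocUpdate (DV := DV) (n := n) seg p a d).pup (.var p) = some a := by
    simp [mallocUpdate]
  rw [h1]
  simp only
  ext pe
  simp only [Set.mem_union, Set.mem_insert_iff, Set.mem_setOf_eq]
  constructor
  · rintro (hv | ⟨i, rfl, -⟩)
    · exact Or.inl hv
    · exact Or.inr ⟨i, rfl⟩
  · rintro (hv | ⟨i, rfl⟩)
    · exact Or.inl hv
    · exact Or.inr ⟨i, rfl, by simp [mallocUpdate]⟩

lemma validStep_malloc2 (h : Heap A D PV DV n) (V) (t : T) (p : PV) (a : A) :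
    validStep seg h V ⟨some (t, .malloc p), Update.pt (.var p) a⟩ =
      insert (PExp.var p) V := by
  unfold validStep
  simp only
  have h1 : (Update.pt (D := D) (DV := DV) (PExp.var (A := A) (n := n) p) a).pup (.var p)
      = some a := by simp [Update.pt]
  rw [h1]
  simp only
  ext pe
  simp only [Set.mem_union, Set.mem_insert_iff, Set.mem_setOf_eq]
  constructor
  · rintro (hv | ⟨i, rfl, hne⟩)
    · exact hv
    · exact absurd (by simp [Update.pt]) hne
  · intro hv
    exact Or.inl hv

-- freedStep lemmas
lemma freedStep_other (h : Heap A D PV DV n) (F : Set A) (t : T) (com : Com D PV DV n)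
    (u) (h1 : ∀ p, com ≠ .free p) (h2 : ∀ p, com ≠ .malloc p) :
    freedStep seg h F ⟨some (t, com), u⟩ = F := by
  unfold freedStep
  cases com <;> first
    | rfl
    | exact absurd rfl (h1 _)
    | exact absurd rfl (h2 _)

lemma freedStep_free (h : Heap A D PV DV n) (F : Set A) (t : T) (p : PV) (u) (a : A)
    (hp : h.pval (.var p) = some a) :
    freedStep seg h F ⟨some (t, .free p), u⟩ = if a = seg then F else insert a F := by
  unfold freedStep; simp only; rw [hp]

lemma freedStep_free_none (h : Heap A D PV DV n) (F : Set A) (t : T) (p : PV) (u)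
    (hp : h.pval (.var p) = none) :
    freedStep seg h F ⟨some (t, .free p), u⟩ = F := by
  unfold freedStep; simp only; rw [hp]

lemma freedStep_malloc1 (h : Heap A D PV DV n) (F : Set A) (t : T) (p : PV)
    (a : A) (d : D) :
    freedStep seg h F ⟨some (t, .malloc p), mallocUpdate seg p a d⟩ = F \ {a} := by
  unfold freedStep
  simp only
  have : (mallocUpdate (DV := DV) (n := n) seg p a d).pup (.var p) = some a := by
    simp [mallocUpdate]
  rw [this]

lemma freedStep_malloc2 (h : Heap A D PV DV n) (F : Set A) (t : T) (p : PV) (a : A) :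
    freedStep seg h F ⟨some (t, .malloc p), Update.pt (.var p) a⟩ = F \ {a} := by
  unfold freedStep
  simp only
  have : (Update.pt (D := D) (DV := DV) (PExp.var (A := A) (n := n) p) a).pup (.var p)
      = some a := by simp [Update.pt]
  rw [this]

-- ownedStep lemmas
lemma ownedStep_com (h : Heap A D PV DV n) (V) (W : A → Option T) (t : T)
    (com : Com D PV DV n) (u) (h1 : ∀ p, com ≠ .free p) (h2 : ∀ p, com ≠ .malloc p) :
    ownedStep seg P h V W ⟨some (t, com), u⟩ =
      fun a => if publishedBy P h V W com a then none else W a := by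
  unfold ownedStep
  cases com <;> first
    | rfl
    | exact absurd rfl (h1 _)
    | exact absurd rfl (h2 _)

lemma publishedBy_false (h : Heap A D PV DV n) (V) (W : A → Option T)
    (com : Com D PV DV n) (h1 : ∀ p q, com ≠ .copyP p q)
    (h2 : ∀ p q i, com ≠ .readNext p q i) (h3 : ∀ p i q, com ≠ .writeNext p i q)
    (a : A) : ¬ publishedBy P h V W com a := by
  rintro ⟨t', -, ⟨p, q, hc, -⟩ | ⟨p, q, i, b, hc, -⟩ | ⟨p, i, q, b, hc, -⟩⟩
  · exact h1 p q hc
  · exact h2 p q i hc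
  · exact h3 p i q hc

lemma ownedStep_inert (h : Heap A D PV DV n) (V) (W : A → Option T) (t : T)
    (com : Com D PV DV n) (u) (h1 : ∀ p, com ≠ .free p) (h2 : ∀ p, com ≠ .malloc p)
    (h3 : ∀ p q, com ≠ .copyP p q) (h4 : ∀ p q i, com ≠ .readNext p q i)
    (h5 : ∀ p i q, com ≠ .writeNext p i q) :
    ownedStep seg P h V W ⟨some (t, com), u⟩ = W := by
  rw [ownedStep_com seg P h V W t com u h1 h2]
  funext a
  rw [if_neg (publishedBy_false P h V W com h3 h4 h5 a)]

lemma ownedStep_free (h : Heap A D PV DV n) (V) (W : A → Option T) (t : T) (p : PV)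
    (u) (b : A) (hp : h.pval (.var p) = some b) :
    ownedStep seg P h V W ⟨some (t, .free p), u⟩ =
      fun a => if a = b ∧ b ≠ seg then none else W a := by
  funext a
  unfold ownedStep; simp only; rw [hp]

lemma ownedStep_free_none (h : Heap A D PV DV n) (V) (W : A → Option T) (t : T)
    (p : PV) (u) (hp : h.pval (.var p) = none) :
    ownedStep seg P h V W ⟨some (t, .free p), u⟩ = W := by
  funext a
  unfold ownedStep; simp only; rw [hp]

lemma ownedStep_malloc1 (h : Heap A D PV DV n) (V) (W : A → Option T) (t : T)
    (p : PV) (a : A) (d : D) :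
    ownedStep seg P h V W ⟨some (t, .malloc p), mallocUpdate seg p a d⟩ =
      fun b => if b = a then (if P.pOwner p = some t then some t else none)
               else W b := by
  funext b
  unfold ownedStep
  simp only
  have : (mallocUpdate (DV := DV) (n := n) seg p a d).pup (.var p) = some a := by
    simp [mallocUpdate]
  rw [this]

lemma ownedStep_malloc2 (h : Heap A D PV DV n) (V) (W : A → Option T) (t : T)
    (p : PV) (a : A) :
    ownedStep seg P h V W ⟨some (t, .malloc p), Update.pt (.var p) a⟩ =
      fun b => if b = a then (if P.pOwner p = some t then some t else none)
               else W b := by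
  funext b
  unfold ownedStep
  simp only
  have : (Update.pt (D := D) (DV := DV) (PExp.var (A := A) (n := n) p) a).pup (.var p)
      = some a := by simp [Update.pt]
  rw [this]

end SPRFProof2
section SPRFProof2b

variable (seg : A) (P : Program D PV DV T n)

lemma freedStep_assert (h : Heap A D PV DV n) (F : Set A) (t : T) (b : Cond PV DV) (u) :
    freedStep seg h F ⟨some (t, .assert b), u⟩ = F := rfl

lemma freedStep_copyP (h : Heap A D PV DV n) (F : Set A) (t : T) (p q : PV) (u) :
    freedStep seg h F ⟨some (t, .copyP p q), u⟩ = F := rfl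

lemma freedStep_readNext (h : Heap A D PV DV n) (F : Set A) (t : T) (p q : PV)
    (i : Fin n) (u) : freedStep seg h F ⟨some (t, .readNext p q i), u⟩ = F := rfl

lemma freedStep_writeNext (h : Heap A D PV DV n) (F : Set A) (t : T) (p : PV)
    (i : Fin n) (q : PV) (u) :
    freedStep seg h F ⟨some (t, .writeNext p i q), u⟩ = F := rfl

lemma freedStep_readData (h : Heap A D PV DV n) (F : Set A) (t : T) (x : DV) (q : PV)
    (u) : freedStep seg h F ⟨some (t, .readData x q), u⟩ = F := rfl

lemma freedStep_writeData (h : Heap A D PV DV n) (F : Set A) (t : T) (q : PV) (x : DV)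
    (u) : freedStep seg h F ⟨some (t, .writeData q x), u⟩ = F := rfl

lemma freedStep_opAsgn (h : Heap A D PV DV n) (F : Set A) (t : T) (x : DV)
    (ys : List DV) (op : List D → D) (u) :
    freedStep seg h F ⟨some (t, .opAsgn x ys op), u⟩ = F := rfl

lemma ownedStep_copyP (h : Heap A D PV DV n) (V) (W : A → Option T) (t : T)
    (p q : PV) (u) :
    ownedStep seg P h V W ⟨some (t, .copyP p q), u⟩ =
      fun a => if publishedBy P h V W (.copyP p q) a then none else W a := rfl

lemma ownedStep_readNext (h : Heap A D PV DV n) (V) (W : A → Option T) (t : T)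
    (p q : PV) (i : Fin n) (u) :
    ownedStep seg P h V W ⟨some (t, .readNext p q i), u⟩ =
      fun a => if publishedBy P h V W (.readNext p q i) a then none else W a := rfl

lemma ownedStep_writeNext (h : Heap A D PV DV n) (V) (W : A → Option T) (t : T)
    (p : PV) (i : Fin n) (q : PV) (u) :
    ownedStep seg P h V W ⟨some (t, .writeNext p i q), u⟩ =
      fun a => if publishedBy P h V W (.writeNext p i q) a then none else W a := rfl

lemma ownedStep_readData (h : Heap A D PV DV n) (V) (W : A → Option T) (t : T)
    (x : DV) (q : PV) (u) :
    ownedStep seg P h V W ⟨some (t, .readData x q), u⟩ = W :=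
  ownedStep_inert seg P h V W t _ u (by simp) (by simp) (by simp) (by simp) (by simp)

lemma ownedStep_writeData (h : Heap A D PV DV n) (V) (W : A → Option T) (t : T)
    (q : PV) (x : DV) (u) :
    ownedStep seg P h V W ⟨some (t, .writeData q x), u⟩ = W :=
  ownedStep_inert seg P h V W t _ u (by simp) (by simp) (by simp) (by simp) (by simp)

lemma ownedStep_opAsgn (h : Heap A D PV DV n) (V) (W : A → Option T) (t : T)
    (x : DV) (ys : List DV) (op : List D → D) (u) :
    ownedStep seg P h V W ⟨some (t, .opAsgn x ys op), u⟩ = W :=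
  ownedStep_inert seg P h V W t _ u (by simp) (by simp) (by simp) (by simp) (by simp)

end SPRFProof2b
section SPRFProof3

variable (seg : A) (P : Program D PV DV T n)

lemma sem_drop_last {mm : Bool} {σ : List (Act A D PV DV T n)} {ctrl}
    (hs : Sem seg P mm σ ctrl) :
    ∀ τ act, σ = τ ++ [act] → τ ≠ [] → ∃ c, Sem seg P mm τ c := by
  cases hs with
  | base dinit =>
      intro τ act heq hne
      have h2 := List.append_inj' (heq.symm.trans (List.nil_append _).symm) rfl
      exact absurd h2.1 hne
  | _ =>
      intro τ act heq hne
      obtain ⟨rfl, -⟩ := List.append_inj' heq rfl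
      exact ⟨_, by assumption⟩

lemma sem_prefix {mm : Bool} (σ2 : List (Act A D PV DV T n)) :
    ∀ (σ1 : List (Act A D PV DV T n)) {ctrl}, Sem seg P mm (σ1 ++ σ2) ctrl →
      σ1 ≠ [] → ∃ c, Sem seg P mm σ1 c := by
  induction σ2 using List.reverseRecOn with
  | nil =>
      intro σ1 ctrl hs hne
      rw [List.append_nil] at hs
      exact ⟨_, hs⟩
  | append_singleton l x ih =>
      intro σ1 ctrl hs hne
      rw [← List.append_assoc] at hs
      obtain ⟨c, hc⟩ := sem_drop_last seg P hs (σ1 ++ l) x rfl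
        (fun h => hne (List.append_eq_nil_iff.mp h).1)
      exact ih σ1 hc hne

lemma sem_step_of_snoc {mm : Bool} {σ : List (Act A D PV DV T n)} {ctrl}
    (hs : Sem seg P mm σ ctrl) :
    ∀ τ act t com, σ = τ ++ [act] → act.tc = some (t, com) →
      ∃ c0 c1, P.step t c0 com c1 := by
  cases hs with
  | base dinit =>
      intro τ act t com heq htc
      have h2 := List.append_inj' (heq.symm.trans (List.nil_append _).symm) rfl
      have h3 : act = (⟨none, baseUpdate seg dinit⟩ : Act A D PV DV T n) := by
        injection h2.2 with h4
      rw [h3] at htc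
      simp at htc
  | _ =>
      intro τ act t com heq htc
      obtain ⟨-, h2⟩ := List.append_inj' heq rfl
      injection h2 with h3 h4
      subst h3
      simp at htc
      obtain ⟨rfl, rfl⟩ := htc
      exact ⟨_, _, by assumption⟩

def InvOn (h : Heap A D PV DV n) (V : Set (PExp A PV n)) (F : Set A)
    (W : A → Option T) : Prop :=
  (∀ pe a, h.pval pe = some a → a ≠ seg → h.dval (.data a) ≠ none) ∧
  (∀ a ∈ F, a ≠ seg ∧ h.dval (.data a) ≠ none ∧ W a = none ∧
     ∀ pe ∈ V, h.pval pe ≠ some a) ∧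
  (∀ a t, W a = some t → ∀ p : PV, PExp.var p ∈ V → h.pval (.var p) = some a →
     P.pOwner p = some t)

end SPRFProof3
section SPRFProof4

variable (seg : A) (P : Program D PV DV T n)

lemma sem_inv {mm : Bool} {τ₀ : List (Act A D PV DV T n)} {ctrl₀}
    (hs : Sem seg P mm τ₀ ctrl₀) :
    InvOn seg P (heapOf τ₀) (validOf seg τ₀) (freedOf seg τ₀) (ownedOf seg P τ₀) := by
  induction hs with
  | base dinit =>
      refine ⟨?_, ?_, ?_⟩
      · intro pe a hpe hne
        cases pe <;> simp [heapOf, Heap.apply, Heap.empty, baseUpdate] at hpe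
        exact absurd hpe.symm hne
      · intro a ha
        simp [freedOf, freedAux, freedStep] at ha
      · intro a t hW
        simp [ownedOf, ownedAux, ownedStep] at hW
  | @assert τ ctrl0 t b c' hs hstep hsat ih =>
      rw [heapOf_append, validOf_append, freedOf_append, ownedOf_append, apply_empty,
        validStep_assert, freedStep_other seg _ _ _ _ _ (by simp) (by simp),
        ownedStep_inert seg P _ _ _ _ _ _ (by simp) (by simp) (by simp) (by simp) (by simp)]
      exact ih
  | @free τ ctrl0 t p c' hs hstep ih =>
      obtain ⟨ihD, ihB, ihA⟩ := ih
      rw [heapOf_append, validOf_append, freedOf_append, ownedOf_append, apply_empty]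
      cases hv : (heapOf τ).pval (.var p) with
      | none =>
          rw [validStep_free_none seg _ _ _ _ _ hv, freedStep_free_none seg _ _ _ _ _ hv,
            ownedStep_free_none seg P _ _ _ _ _ _ hv]
          exact ⟨ihD, ihB, ihA⟩
      | some c =>
          rw [validStep_free seg _ _ _ _ _ _ hv, freedStep_free seg _ _ _ _ _ _ hv,
            ownedStep_free seg P _ _ _ _ _ _ _ hv]
          by_cases hcs : c = seg
          · rw [if_pos hcs, if_pos hcs]
            refine ⟨ihD, ?_, ?_⟩
            · intro a ha
              obtain ⟨h1, h2, h3, h4⟩ := ihB a ha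
              refine ⟨h1, h2, ?_, h4⟩
              simp only
              rw [if_neg (by rintro ⟨-, hne⟩; exact hne hcs)]
              exact h3
            · intro a t' hW p' hp hval
              simp only at hW
              rw [if_neg (by rintro ⟨-, hne⟩; exact hne hcs)] at hW
              exact ihA a t' hW p' hp hval
          · rw [if_neg hcs, if_neg hcs]
            refine ⟨ihD, ?_, ?_⟩
            · intro a ha
              rcases Set.mem_insert_iff.mp ha with rfl | haF
              · refine ⟨hcs, ihD _ _ hv hcs, ?_, ?_⟩
                · simp [hcs]
                · intro pe hpe hcon
                  exact hpe.2 (Or.inl hcon)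
              · obtain ⟨h1, h2, h3, h4⟩ := ihB _ haF
                refine ⟨h1, h2, ?_, fun pe hpe => h4 pe hpe.1⟩
                simp only
                split_ifs with h5
                · rfl
                · exact h3
            · intro a t' hW p' hp hval
              simp only at hW
              have hW' : ownedOf seg P τ a = some t' := by
                by_cases h5 : (a = c ∧ c ≠ seg)
                · rw [if_pos h5] at hW
                  exact absurd hW (by simp)
                · rw [if_neg h5] at hW
                  exact hW
              exact ihA a t' hW' p' hp.1 hval
  | @copyP τ ctrl0 t p q c' b hs hstep hq ih =>
      obtain ⟨ihD, ihB, ihA⟩ := ih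
      rw [heapOf_append, validOf_append, freedOf_append, ownedOf_append,
        validStep_copyP, freedStep_copyP, ownedStep_copyP]
      refine ⟨?_, ?_, ?_⟩
      · intro pe a hpe hne
        rw [pval_apply_pt] at hpe
        rw [dval_apply_pt]
        split_ifs at hpe with h1
        · injection hpe with h2
          subst h2
          exact ihD _ _ hq hne
        · exact ihD _ _ hpe hne
      · intro a ha
        obtain ⟨h1, h2, h3, h4⟩ := ihB a ha
        refine ⟨h1, by rw [dval_apply_pt]; exact h2, ?_, ?_⟩
        · simp only
          split_ifs with h5
          · rfl
          · exact h3
        · intro pe hpe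
          rw [pval_apply_pt]
          split_ifs with h5
          · subst h5
            by_cases h6 : PExp.var q ∈ validOf seg τ
            · rw [if_pos h6] at hpe
              intro hcon
              injection hcon with hba
              subst hba
              exact h4 _ h6 hq
            · rw [if_neg h6] at hpe
              exact absurd rfl hpe.2
          · have hpeV : pe ∈ validOf seg τ := by
              by_cases h6 : PExp.var q ∈ validOf seg τ
              · rw [if_pos h6] at hpe
                rcases Set.mem_insert_iff.mp hpe with h7 | h7
                · exact absurd h7 h5
                · exact h7
              · rw [if_neg h6] at hpe
                exact hpe.1
            exact h4 pe hpeV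
      · intro a t' hW p' hp' hval
        simp only at hW
        have hWa : ownedOf seg P τ a = some t' ∧
            ¬ publishedBy P (heapOf τ) (validOf seg τ) (ownedOf seg P τ) (.copyP p q) a := by
          by_cases hpub : publishedBy P (heapOf τ) (validOf seg τ) (ownedOf seg P τ) (.copyP p q) a
          · rw [if_pos hpub] at hW
            exact absurd hW (by simp)
          · rw [if_neg hpub] at hW
            exact ⟨hW, hpub⟩
        obtain ⟨hWa, hnpub⟩ := hWa
        rw [pval_apply_pt] at hval
        by_cases hpp : PExp.var p' = PExp.var (A := A) (n := n) p
        · rw [if_pos hpp] at hval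
          injection hval with hba
          have hqV : PExp.var q ∈ validOf seg τ := by
            by_cases h6 : PExp.var q ∈ validOf seg τ
            · exact h6
            · rw [if_neg h6, hpp] at hp'
              exact absurd rfl hp'.2
          have hp_eq : p' = p := by injection hpp
          subst hp_eq
          by_contra hno
          exact hnpub ⟨t', hWa, Or.inl ⟨p', q, rfl, hqV, by rw [hq, hba], hno⟩⟩
        · rw [if_neg hpp] at hval
          have hp'V : PExp.var p' ∈ validOf seg τ := by
            split_ifs at hp' with h6
            · rcases Set.mem_insert_iff.mp hp' with h7 | h7
              · exact absurd h7 hpp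
              · exact h7
            · exact hp'.1
          exact ihA a t' hWa p' hp'V hval
  | @readNext τ ctrl0 t p q i c' a b hs hstep hq hns hnext ih =>
      obtain ⟨ihD, ihB, ihA⟩ := ih
      rw [heapOf_append, validOf_append, freedOf_append, ownedOf_append,
        validStep_readNext seg _ _ _ _ _ _ _ _ hq, freedStep_readNext, ownedStep_readNext]
      refine ⟨?_, ?_, ?_⟩
      · intro pe c hpe hne
        rw [pval_apply_pt] at hpe
        rw [dval_apply_pt]
        split_ifs at hpe with h1
        · injection hpe with h2
          subst h2
          exact ihD _ _ hnext hne
        · exact ihD _ _ hpe hne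
      · intro c hc
        obtain ⟨h1, h2, h3, h4⟩ := ihB c hc
        refine ⟨h1, by rw [dval_apply_pt]; exact h2, ?_, ?_⟩
        · simp only
          split_ifs with h5
          · rfl
          · exact h3
        · intro pe hpe
          rw [pval_apply_pt]
          split_ifs with h5
          · subst h5
            by_cases h6 : PExp.next a i ∈ validOf seg τ
            · rw [if_pos h6] at hpe
              intro hcon
              injection hcon with hbc
              subst hbc
              exact h4 _ h6 hnext
            · rw [if_neg h6] at hpe
              exact absurd rfl hpe.2
          · have hpeV : pe ∈ validOf seg τ := by
              by_cases h6 : PExp.next a i ∈ validOf seg τ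
              · rw [if_pos h6] at hpe
                rcases Set.mem_insert_iff.mp hpe with h7 | h7
                · exact absurd h7 h5
                · exact h7
              · rw [if_neg h6] at hpe
                exact hpe.1
            exact h4 pe hpeV
      · intro c t' hW p' hp' hval
        simp only at hW
        have hWa : ownedOf seg P τ c = some t' ∧
            ¬ publishedBy P (heapOf τ) (validOf seg τ) (ownedOf seg P τ)
              (.readNext p q i) c := by
          by_cases hpub : publishedBy P (heapOf τ) (validOf seg τ) (ownedOf seg P τ) (.readNext p q i) c
          · rw [if_pos hpub] at hW
            exact absurd hW (by simp)
          · rw [if_neg hpub] at hW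
            exact ⟨hW, hpub⟩
        obtain ⟨hWa, hnpub⟩ := hWa
        rw [pval_apply_pt] at hval
        by_cases hpp : PExp.var p' = PExp.var (A := A) (n := n) p
        · rw [if_pos hpp] at hval
          injection hval with hbc
          have hmem : PExp.next a i ∈ validOf seg τ := by
            by_cases h6 : PExp.next a i ∈ validOf seg τ
            · exact h6
            · rw [if_neg h6, hpp] at hp'
              exact absurd rfl hp'.2
          have hp_eq : p' = p := by injection hpp
          subst hp_eq
          by_contra hno
          exact hnpub ⟨t', hWa,
            Or.inr (Or.inl ⟨p', q, i, a, rfl, hq, hmem, by rw [hnext, hbc], hno⟩)⟩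
        · rw [if_neg hpp] at hval
          have hp'V : PExp.var p' ∈ validOf seg τ := by
            split_ifs at hp' with h6
            · rcases Set.mem_insert_iff.mp hp' with h7 | h7
              · exact absurd h7 hpp
              · exact h7
            · exact hp'.1
          exact ihA c t' hWa p' hp'V hval
  | @writeNext τ ctrl0 t p i q c' a b hs hstep hp hns hq ih =>
      obtain ⟨ihD, ihB, ihA⟩ := ih
      rw [heapOf_append, validOf_append, freedOf_append, ownedOf_append,
        validStep_writeNext seg _ _ _ _ _ _ _ _ hp, freedStep_writeNext,
        ownedStep_writeNext]
      refine ⟨?_, ?_, ?_⟩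
      · intro pe c hpe hne
        rw [pval_apply_pt] at hpe
        rw [dval_apply_pt]
        split_ifs at hpe with h1
        · injection hpe with h2
          subst h2
          exact ihD _ _ hq hne
        · exact ihD _ _ hpe hne
      · intro c hc
        obtain ⟨h1, h2, h3, h4⟩ := ihB c hc
        refine ⟨h1, by rw [dval_apply_pt]; exact h2, ?_, ?_⟩
        · simp only
          split_ifs with h5
          · rfl
          · exact h3
        · intro pe hpe
          rw [pval_apply_pt]
          split_ifs with h5
          · subst h5
            by_cases h6 : PExp.var q ∈ validOf seg τ
            · intro hcon
              injection hcon with hbc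
              subst hbc
              exact h4 _ h6 hq
            · rw [if_neg h6] at hpe
              exact absurd rfl hpe.2
          · have hpeV : pe ∈ validOf seg τ := by
              by_cases h6 : PExp.var q ∈ validOf seg τ
              · rw [if_pos h6] at hpe
                rcases Set.mem_insert_iff.mp hpe with h7 | h7
                · exact absurd h7 h5
                · exact h7
              · rw [if_neg h6] at hpe
                exact hpe.1
            exact h4 pe hpeV
      · intro c t' hW p' hp' hval
        simp only at hW
        have hWa : ownedOf seg P τ c = some t' := by
          by_cases hpub : publishedBy P (heapOf τ) (validOf seg τ) (ownedOf seg P τ) (.writeNext p i q) c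
          · rw [if_pos hpub] at hW
            exact absurd hW (by simp)
          · rw [if_neg hpub] at hW
            exact hW
        have hvne : PExp.var p' ≠ PExp.next (PV := PV) a i := by simp
        rw [pval_apply_pt, if_neg hvne] at hval
        have hp'V : PExp.var p' ∈ validOf seg τ := by
          split_ifs at hp' with h6
          · rcases Set.mem_insert_iff.mp hp' with h7 | h7
            · exact absurd h7 hvne
            · exact h7
          · exact hp'.1
        exact ihA c t' hWa p' hp'V hval
  | @readData τ ctrl0 t x q c' a d hs hstep hq hns hd ih =>
      obtain ⟨ihD, ihB, ihA⟩ := ih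
      rw [heapOf_append, validOf_append, freedOf_append, ownedOf_append,
        validStep_readData, freedStep_readData, ownedStep_readData]
      refine ⟨?_, ?_, ?_⟩
      · intro pe c hpe hne
        rw [pval_apply_dt] at hpe
        rw [dval_apply_dt, if_neg (by simp)]
        exact ihD _ _ hpe hne
      · intro c hc
        obtain ⟨h1, h2, h3, h4⟩ := ihB c hc
        refine ⟨h1, by rw [dval_apply_dt, if_neg (by simp)]; exact h2, h3, ?_⟩
        intro pe hpe
        rw [pval_apply_dt]
        exact h4 pe hpe
      · intro c t' hW p' hp' hval
        rw [pval_apply_dt] at hval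
        exact ihA c t' hW p' hp' hval
  | @writeData τ ctrl0 t q x c' a d hs hstep hq hns hd ih =>
      obtain ⟨ihD, ihB, ihA⟩ := ih
      rw [heapOf_append, validOf_append, freedOf_append, ownedOf_append,
        validStep_writeData, freedStep_writeData, ownedStep_writeData]
      refine ⟨?_, ?_, ?_⟩
      · intro pe c hpe hne
        rw [pval_apply_dt] at hpe
        rw [dval_apply_dt]
        split_ifs with h1
        · simp
        · exact ihD _ _ hpe hne
      · intro c hc
        obtain ⟨h1, h2, h3, h4⟩ := ihB c hc
        refine ⟨h1, ?_, h3, ?_⟩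
        · rw [dval_apply_dt]
          split_ifs with h5
          · simp
          · exact h2
        · intro pe hpe
          rw [pval_apply_dt]
          exact h4 pe hpe
      · intro c t' hW p' hp' hval
        rw [pval_apply_dt] at hval
        exact ihA c t' hW p' hp' hval
  | @opAsgn τ ctrl0 t x ys op c' ds hs hstep hds ih =>
      obtain ⟨ihD, ihB, ihA⟩ := ih
      rw [heapOf_append, validOf_append, freedOf_append, ownedOf_append,
        validStep_opAsgn, freedStep_opAsgn, ownedStep_opAsgn]
      refine ⟨?_, ?_, ?_⟩
      · intro pe c hpe hne
        rw [pval_apply_dt] at hpe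
        rw [dval_apply_dt, if_neg (by simp)]
        exact ihD _ _ hpe hne
      · intro c hc
        obtain ⟨h1, h2, h3, h4⟩ := ihB c hc
        refine ⟨h1, by rw [dval_apply_dt, if_neg (by simp)]; exact h2, h3, ?_⟩
        intro pe hpe
        rw [pval_apply_dt]
        exact h4 pe hpe
      · intro c t' hW p' hp' hval
        rw [pval_apply_dt] at hval
        exact ihA c t' hW p' hp' hval
  | @malloc1 τ ctrl0 t p c' a d hs hstep hfresh ih =>
      obtain ⟨ihD, ihB, ihA⟩ := ih
      rw [heapOf_append, validOf_append, freedOf_append, ownedOf_append,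
        validStep_malloc1, freedStep_malloc1, ownedStep_malloc1]
      refine ⟨?_, ?_, ?_⟩
      · intro pe c hpe hne
        rw [pval_apply_malloc] at hpe
        rw [dval_apply_malloc]
        split_ifs at hpe with h1 h2
        · injection hpe with h3
          subst h3
          rw [if_pos rfl]
          simp
        · injection hpe with h3
          exact absurd h3.symm hne
        · split_ifs with h4
          · simp
          · exact ihD _ _ hpe hne
      · intro c hc
        have hcF : c ∈ freedOf seg τ := hc.1
        have hcane : c ≠ a := fun h => hc.2 h
        obtain ⟨h1, h2, h3, h4⟩ := ihB c hcF
        refine ⟨h1, ?_, ?_, ?_⟩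
        · rw [dval_apply_malloc]
          split_ifs with h5
          · simp
          · exact h2
        · simp only
          rw [if_neg hcane]
          exact h3
        · intro pe hpe
          rw [pval_apply_malloc]
          split_ifs with g1 g2
          · intro hcon
            injection hcon with g3
            exact hcane g3.symm
          · intro hcon
            injection hcon with g3
            exact h1 g3.symm
          · have hpeV : pe ∈ validOf seg τ := by
              rcases hpe with h5 | h5
              · rcases Set.mem_insert_iff.mp h5 with h6 | h6
                · exact absurd h6 g1
                · exact h6
              · exact absurd h5 g2
            exact h4 pe hpeV
      · intro c t' hW p' hp' hval
        simp only at hW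
        rw [pval_apply_malloc] at hval
        by_cases hca : c = a
        · subst hca
          rw [if_pos rfl] at hW
          have hop : P.pOwner p = some t' := by
            by_cases h5 : P.pOwner p = some t
            · rw [if_pos h5] at hW
              injection hW with h6
              rw [h5, h6]
            · rw [if_neg h5] at hW
              exact absurd hW (by simp)
          by_cases hpp : p' = p
          · subst hpp
            exact hop
          · rw [if_neg (by simp [hpp]), if_neg (by simp)] at hval
            exact absurd (Or.inr (Or.inl ⟨PExp.var p', hval⟩)) hfresh
        · rw [if_neg hca] at hW
          by_cases hpp : p' = p
          · subst hpp
            rw [if_pos rfl] at hval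
            injection hval with h5
            exact absurd h5.symm hca
          · rw [if_neg (by simp [hpp]), if_neg (by simp)] at hval
            have hp'V : PExp.var p' ∈ validOf seg τ := by
              rcases hp' with h5 | h5
              · rcases Set.mem_insert_iff.mp h5 with h6 | h6
                · exact absurd h6 (by simp [hpp])
                · exact h6
              · rcases h5 with ⟨j, h6⟩
                cases h6
            exact ihA c t' hW p' hp'V hval
  | @malloc2 τ ctrl0 t p c' a hmm hs hstep ha ih =>
      obtain ⟨ihD, ihB, ihA⟩ := ih
      obtain ⟨haseg, hadata, haW, haV⟩ := ihB a ha
      rw [heapOf_append, validOf_append, freedOf_append, ownedOf_append,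
        validStep_malloc2, freedStep_malloc2, ownedStep_malloc2]
      refine ⟨?_, ?_, ?_⟩
      · intro pe c hpe hne
        rw [pval_apply_pt] at hpe
        rw [dval_apply_pt]
        split_ifs at hpe with h1
        · injection hpe with h2
          subst h2
          exact hadata
        · exact ihD _ _ hpe hne
      · intro c hc
        have hcF : c ∈ freedOf seg τ := hc.1
        have hcane : c ≠ a := fun h => hc.2 h
        obtain ⟨h1, h2, h3, h4⟩ := ihB c hcF
        refine ⟨h1, by rw [dval_apply_pt]; exact h2, ?_, ?_⟩
        · simp only
          rw [if_neg hcane]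
          exact h3
        · intro pe hpe
          rw [pval_apply_pt]
          split_ifs with g1
          · intro hcon
            injection hcon with g2
            exact hcane g2.symm
          · have hpeV : pe ∈ validOf seg τ := by
              rcases Set.mem_insert_iff.mp hpe with h5 | h5
              · exact absurd h5 g1
              · exact h5
            exact h4 pe hpeV
      · intro c t' hW p' hp' hval
        simp only at hW
        rw [pval_apply_pt] at hval
        by_cases hca : c = a
        · subst hca
          rw [if_pos rfl] at hW
          have hop : P.pOwner p = some t' := by
            by_cases h5 : P.pOwner p = some t
            · rw [if_pos h5] at hW
              injection hW with h6
              rw [h5, h6]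
            · rw [if_neg h5] at hW
              exact absurd hW (by simp)
          by_cases hpp : p' = p
          · subst hpp
            exact hop
          · rw [if_neg (by simp [hpp])] at hval
            have hp'V : PExp.var p' ∈ validOf seg τ := by
              rcases Set.mem_insert_iff.mp hp' with h5 | h5
              · exact absurd h5 (by simp [hpp])
              · exact h5
            exact absurd hval (haV _ hp'V)
        · rw [if_neg hca] at hW
          by_cases hpp : p' = p
          · subst hpp
            rw [if_pos rfl] at hval
            injection hval with h5
            exact absurd h5.symm hca
          · rw [if_neg (by simp [hpp])] at hval
            have hp'V : PExp.var p' ∈ validOf seg τ := by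
              rcases Set.mem_insert_iff.mp hp' with h5 | h5
              · exact absurd h5 (by simp [hpp])
              · exact h5
            exact ihA c t' hW p' hp'V hval

end SPRFProof4

/-- SPRF guarantee, Theorem 2.1: if mmsem(P) is SPRF, then
mmsem(P) coincides with the ownership-respecting semantics resmmsem(P). -/
theorem sprf_guarantee (seg : A) (P : Program D PV DV T n)
    (hSPRF : SetSPRF seg (mmsem seg P)) :
    mmsem seg P = resmmsem seg P := by
  apply Set.eq_of_subset_of_subset
  · intro σ hσ
    refine ⟨hσ, ?_⟩
    rintro τ act ⟨rest, hpre⟩ hviol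
    obtain ⟨ctrl, hs⟩ := hσ
    obtain ⟨t, com, htc, p, hcom, a, t', hval, hown, hmix⟩ := hviol
    have hs' : Sem seg P true ((τ ++ [act]) ++ rest) ctrl := by
      rw [hpre]
      exact hs
    obtain ⟨c2, hs2⟩ := sem_prefix seg P rest (τ ++ [act]) hs' (by simp)
    have hnspr := hSPRF (τ ++ [act]) ⟨c2, hs2⟩
    have hvalidp : PExp.var p ∈ validOf seg τ := by
      by_contra hnv
      exact hnspr ⟨τ, act, rfl, t, com, htc, Or.inl ⟨p, hcom, hnv⟩⟩
    have hInv : InvOn seg P (heapOf τ) (validOf seg τ) (freedOf seg τ)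
        (ownedOf seg P τ) := by
      rcases List.eq_nil_or_concat τ with rfl | ⟨l, x, rfl⟩
      · refine ⟨?_, ?_, ?_⟩
        · intro pe c hpe _
          exact absurd hpe (by simp [heapOf, Heap.empty])
        · intro c hc
          exact absurd hc (Set.notMem_empty c)
        · intro c t'' hW
          simp [ownedOf, ownedAux] at hW
      · rw [List.concat_eq_append] at hs2 ⊢
        obtain ⟨c3, hs3⟩ := sem_prefix seg P [act] (l ++ [x]) hs2 (by simp)
        exact sem_inv seg P hs3
    have hpo : P.pOwner p = some t' := hInv.2.2 a t' hown p hvalidp hval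
    obtain ⟨c0, c1, hstep⟩ := sem_step_of_snoc seg P hs2 τ act t com rfl htc
    have hpv : p ∈ Com.pvars com := by
      rcases hcom with rfl | ⟨i, q, rfl⟩ | ⟨x, rfl⟩
      · exact rfl
      · exact Or.inl rfl
      · exact rfl
    rcases P.stepPVars t c0 com c1 hstep p hpv with h0 | h0
    · rw [h0] at hpo
      cases hpo
    · rw [h0] at hpo
      injection hpo with h1
      rcases hmix with h2 | h2
      · exact h2 h1.symm
      · rw [h2] at h0
        cases h0
  · intro σ hσ
    exact hσ.1

end

end PRF
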